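/- Let k be a field, G a group acting on the right transitively on a set X, x₀ ∈ X with stabilizer H = {g ∈ G | x₀ · g = x₀}, and z : G × G → (X → kˣ) a normalized 2-cocycle of G with values in F(X,kˣ). Let rep : X → G be a section with x₀ · rep(x) = x for all x ∈ X and rep(x₀) = e. For x ∈ X and g ∈ G set g̃(x,g) := rep(x) · g · (rep(x·g))⁻¹; then g̃(x,g) ∈ H. Let V be a k-vector space and ψ : H → GL(V) a map with ψ(e) = id_V and ψ(h₁h₂) = z(h₂⁻¹,h₁⁻¹)(x₀) · (ψ(h₁) ∘ ψ(h₂)) for all h₁,h₂ ∈ H. Define θ(x,g) := (z(g̃(x,g), rep(x·g))(x₀) / z(rep(x), g)(x₀)) · ψ(g̃(x,g)⁻¹) ∈ GL(V). Then: (a) θ(x,e) = id_V for all x ∈ X; (b) θ(x, g g') = z(g,g')(x) · (θ(x·g, g') ∘ θ(x,g)) for all x ∈ X and g,g' ∈ G; (c) θ(x₀, h⁻¹) = ψ(h) for all h ∈ H. -/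

import Mathlib

/-- Given a transitive right `G`-set `X`, a base point `x₀` with stabilizer `H`,
a normalized 2-cocycle `z` with values in `F(X,kˣ)`, a section `rep` of the action with
`rep x₀ = e`, the elements `g̃(x,g) = rep x * g * (rep (x·g))⁻¹` lie in `H`, and for any
projective representation `ψ` of `H` with central charge `ẑ_{x₀}`, the maps
`θ(x,g) := (z(g̃(x,g), rep(x·g))(x₀) / z(rep x, g)(x₀)) · ψ(g̃(x,g)⁻¹)` satisfy
`θ(x,e) = id`, `θ(x,gg') = z(g,g')(x) · (θ(x·g,g') ∘ θ(x,g))` and `θ(x₀,h⁻¹) = ψ(h)`. -/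
theorem projective_rep_extends_to_equivariant_bundle
    {k G X V : Type*} [Field k] [Group G] [AddCommGroup V] [Module k V]
    (act : X → G → X)
    (hact_one : ∀ x, act x 1 = x)
    (hact_mul : ∀ x g g', act (act x g) g' = act x (g * g'))
    (htrans : ∀ x y : X, ∃ g, act x g = y)
    (x₀ : X)
    (z : G → G → X → kˣ)
    (hz : ∀ (g₁ g₂ g₃ : G) (x' : X),
      z g₂ g₃ (act x' g₁) * z g₁ (g₂ * g₃) x' = z (g₁ * g₂) g₃ x' * z g₁ g₂ x')
    (hznorm : ∀ g : G, z g 1 = 1 ∧ z 1 g = 1)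
    (rep : X → G)
    (hrep : ∀ x, act x₀ (rep x) = x)
    (hrep₀ : rep x₀ = 1)
    (gt : X → G → G)
    (hgt : ∀ x g, gt x g = rep x * g * (rep (act x g))⁻¹)
    (ψ : G → (Module.End k V)ˣ)
    (hψ_one : ψ 1 = 1)
    (hψ_mul : ∀ h₁ h₂ : G, act x₀ h₁ = x₀ → act x₀ h₂ = x₀ →
      ψ (h₁ * h₂) =
        Units.map (algebraMap k (Module.End k V)).toMonoidHom (z h₂⁻¹ h₁⁻¹ x₀) *
          (ψ h₁ * ψ h₂))
    (θ : X → G → (Module.End k V)ˣ)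
    (hθ : ∀ x g, θ x g =
      Units.map (algebraMap k (Module.End k V)).toMonoidHom
          (z (gt x g) (rep (act x g)) x₀ / z (rep x) g x₀) *
        ψ ((gt x g)⁻¹)) :
    -- `g̃(x,g)` lies in the stabilizer `H` of `x₀`
    (∀ (x : X) (g : G), act x₀ (gt x g) = x₀) ∧
    -- (a) `θ(x,e) = id`
    (∀ x : X, θ x 1 = 1) ∧
    -- (b) `θ(x,gg') = z(g,g')(x) · (θ(x·g,g') ∘ θ(x,g))`
    (∀ (x : X) (g g' : G),
      θ x (g * g') =
        Units.map (algebraMap k (Module.End k V)).toMonoidHom (z g g' x) *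
          (θ (act x g) g' * θ x g)) ∧
    -- (c) `θ(x₀,h⁻¹) = ψ(h)` for `h ∈ H`
    (∀ h : G, act x₀ h = x₀ → θ x₀ h⁻¹ = ψ h) := by

  set c := Units.map (algebraMap k (Module.End k V)).toMonoidHom with hc_def
  have hc : ∀ (r : kˣ) (u : (Module.End k V)ˣ), c r * u = u * c r := by
    intro r u
    apply Units.ext
    simpa [hc_def] using Algebra.commutes (r : k) (u : Module.End k V)
  have hkey : ∀ y : X, act y (rep y)⁻¹ = x₀ := by
    intro y
    have h := hact_mul x₀ (rep y) (rep y)⁻¹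
    rw [mul_inv_cancel, hact_one, hrep y] at h
    exact h
  have hstab : ∀ (x : X) (g : G), act x₀ (gt x g) = x₀ := by
    intro x g
    rw [hgt, ← hact_mul, ← hact_mul, hrep x]
    exact hkey (act x g)
  have hstab_inv : ∀ g : G, act x₀ g = x₀ → act x₀ g⁻¹ = x₀ := by
    intro g hg
    conv_lhs => rw [← hg]
    rw [hact_mul, mul_inv_cancel, hact_one]
  refine ⟨hstab, ?_, ?_, ?_⟩
  · intro x
    have h1 : gt x 1 = 1 := by
      rw [hgt, hact_one, mul_one, mul_inv_cancel]
    rw [hθ, h1, hact_one, (hznorm (rep x)).2, (hznorm (rep x)).1]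
    simp [hψ_one]
  · intro x g g'
    set a := gt x g with ha_def
    set b := gt (act x g) g' with hb_def
    have ha : act x₀ a = x₀ := hstab x g
    have hb : act x₀ b = x₀ := hstab (act x g) g'
    have hab : gt x (g * g') = a * b := by
      rw [ha_def, hb_def, hgt, hgt, hgt, ← hact_mul]
      group
    have hbr : b * rep (act (act x g) g') = rep (act x g) * g' := by
      rw [hb_def, hgt]
      group
    have har : a * rep (act x g) = rep x * g := by
      rw [ha_def, hgt]
      group
    -- cocycle instances in k
    have E1 : (z b (rep (act (act x g) g')) x₀ : k) * z a (rep (act x g) * g') x₀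
        = z (a * b) (rep (act (act x g) g')) x₀ * z a b x₀ := by
      have := hz a b (rep (act (act x g) g')) x₀
      rw [ha, hbr] at this
      exact_mod_cast congrArg Units.val this
    have E2 : (z (rep (act x g)) g' x₀ : k) * z a (rep (act x g) * g') x₀
        = z (rep x * g) g' x₀ * z a (rep (act x g)) x₀ := by
      have := hz a (rep (act x g)) g' x₀
      rw [ha, har] at this
      exact_mod_cast congrArg Units.val this
    have E3 : (z g g' x : k) * z (rep x) (g * g') x₀
        = z (rep x * g) g' x₀ * z (rep x) g x₀ := by
      have := hz (rep x) g g' x₀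
      rw [hrep x] at this
      exact_mod_cast congrArg Units.val this
    have Pk : (z (a * b) (rep (act (act x g) g')) x₀ : k) * z a b x₀
          * z (rep (act x g)) g' x₀ * z (rep x) g x₀
        = z g g' x * z b (rep (act (act x g) g')) x₀ * z a (rep (act x g)) x₀
          * z (rep x) (g * g') x₀ := by
      linear_combination (-((z (rep (act x g)) g' x₀ : k) * z (rep x) g x₀)) * E1
        + ((z b (rep (act (act x g) g')) x₀ : k) * z (rep x) g x₀) * E2
        + (-((z b (rep (act (act x g) g')) x₀ : k) * z a (rep (act x g)) x₀)) * E3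
    -- scalar identity in kˣ
    have S : (z (a * b) (rep (act x (g * g'))) x₀ / z (rep x) (g * g') x₀) * z a b x₀
        = z g g' x * ((z b (rep (act (act x g) g')) x₀ / z (rep (act x g)) g' x₀)
          * (z a (rep (act x g)) x₀ / z (rep x) g x₀)) := by
      rw [hact_mul x g g'] at Pk
      rw [hact_mul]
      apply Units.ext
      simp only [Units.val_mul, Units.val_div_eq_div_val]
      field_simp
      linear_combination Pk
    -- ψ multiplicativity
    have hψab : ψ (a * b)⁻¹ = c (z a b x₀) * (ψ b⁻¹ * ψ a⁻¹) := by
      have := hψ_mul b⁻¹ a⁻¹ (hstab_inv b hb) (hstab_inv a ha)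
      rw [inv_inv, inv_inv] at this
      rw [mul_inv_rev]
      exact this
    have key : ∀ (s t : kˣ) (u v : (Module.End k V)ˣ),
        c s * u * (c t * v) = c (s * t) * (u * v) := by
      intro s t u v
      rw [map_mul, mul_assoc, ← mul_assoc u, ← hc t u, mul_assoc (c t), ← mul_assoc]
    have hL : θ x (g * g') =
        c ((z (a * b) (rep (act x (g * g'))) x₀ / z (rep x) (g * g') x₀) * z a b x₀) *
          (ψ b⁻¹ * ψ a⁻¹) := by
      rw [hθ, hab, hψab, ← mul_assoc, ← map_mul]
    rw [hL, hθ (act x g) g', hθ x g, ← ha_def, ← hb_def, key, S, map_mul, mul_assoc]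
  · intro h hh
    have h1 : gt x₀ h⁻¹ = h⁻¹ := by
      rw [hgt, hstab_inv h hh, hrep₀, one_mul, inv_one, mul_one]
    rw [hθ, h1, hstab_inv h hh, hrep₀, inv_inv, (hznorm h⁻¹).1, (hznorm h⁻¹).2]
    simp
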